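/- Let E be a set and Z : E⁴ → ℝ. With NCycle_n as the cyclic sum of Z over length-4 cyclic factors, for all a,b,c,d ∈ E: NCycle_4(a,b,c,d) = NCycle_5(a,b,c,d,a) + NCycle_5(a,b,c,c,d) − NCycle_6(a,b,c,c,d,a). Hence if NCycle_5 ≡ 0 and NCycle_6 ≡ 0 then NCycle_4 ≡ 0. -/

import Mathlib

/-- Cyclic sum of `Z` over length-4 cyclic factors of a word of length `n`. -/
def ncyc {E : Type*} (Z : E → E → E → E → ℝ) (n : ℕ) (x : ℕ → E) : ℝ :=
  ∑ j ∈ Finset.range n,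
    Z (x (j % n)) (x ((j+1) % n)) (x ((j+2) % n)) (x ((j+3) % n))

open Fin.NatCast in
/-- View a finite tuple as a periodic word indexed by `ℕ`. -/
def ofT {E : Type*} {n : ℕ} [NeZero n] (v : Fin n → E) : ℕ → E :=
  fun j => v (j : Fin n)

/-- `NCycle_4` as a combination of `NCycle_5` and `NCycle_6`; hence if
`NCycle_5 ≡ 0` and `NCycle_6 ≡ 0` then `NCycle_4 ≡ 0`. -/
theorem stmt4 {E : Type*} (Z : E → E → E → E → ℝ) :
    (∀ a b c d : E,
      ncyc Z 4 (ofT ![a,b,c,d])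
        = ncyc Z 5 (ofT ![a,b,c,d,a]) + ncyc Z 5 (ofT ![a,b,c,c,d])
          - ncyc Z 6 (ofT ![a,b,c,c,d,a]))
    ∧ ((∀ x : ℕ → E, ncyc Z 5 x = 0) → (∀ x : ℕ → E, ncyc Z 6 x = 0) →
        ∀ x : ℕ → E, ncyc Z 4 x = 0) := by
  have key : ∀ a b c d : E,
      ncyc Z 4 (ofT ![a,b,c,d])
        = ncyc Z 5 (ofT ![a,b,c,d,a]) + ncyc Z 5 (ofT ![a,b,c,c,d])
          - ncyc Z 6 (ofT ![a,b,c,c,d,a]) := by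
    intro a b c d
    simp only [ncyc, Finset.sum_range_succ, Finset.sum_range_zero, Nat.reduceMod,
      Nat.reduceAdd, zero_add,
      show ofT ![a,b,c,d] 0 = a from rfl, show ofT ![a,b,c,d] 1 = b from rfl,
      show ofT ![a,b,c,d] 2 = c from rfl, show ofT ![a,b,c,d] 3 = d from rfl,
      show ofT ![a,b,c,d,a] 0 = a from rfl, show ofT ![a,b,c,d,a] 1 = b from rfl,
      show ofT ![a,b,c,d,a] 2 = c from rfl, show ofT ![a,b,c,d,a] 3 = d from rfl,
      show ofT ![a,b,c,d,a] 4 = a from rfl,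
      show ofT ![a,b,c,c,d] 0 = a from rfl, show ofT ![a,b,c,c,d] 1 = b from rfl,
      show ofT ![a,b,c,c,d] 2 = c from rfl, show ofT ![a,b,c,c,d] 3 = c from rfl,
      show ofT ![a,b,c,c,d] 4 = d from rfl,
      show ofT ![a,b,c,c,d,a] 0 = a from rfl, show ofT ![a,b,c,c,d,a] 1 = b from rfl,
      show ofT ![a,b,c,c,d,a] 2 = c from rfl, show ofT ![a,b,c,c,d,a] 3 = c from rfl,
      show ofT ![a,b,c,c,d,a] 4 = d from rfl, show ofT ![a,b,c,c,d,a] 5 = a from rfl]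
    ring
  refine ⟨key, ?_⟩
  intro h5 h6 x
  have hx : ncyc Z 4 x = ncyc Z 4 (ofT ![x 0, x 1, x 2, x 3]) := by
    simp only [ncyc, Finset.sum_range_succ, Finset.sum_range_zero, Nat.reduceMod,
      Nat.reduceAdd, zero_add,
      show ofT ![x 0, x 1, x 2, x 3] 0 = x 0 from rfl,
      show ofT ![x 0, x 1, x 2, x 3] 1 = x 1 from rfl,
      show ofT ![x 0, x 1, x 2, x 3] 2 = x 2 from rfl,
      show ofT ![x 0, x 1, x 2, x 3] 3 = x 3 from rfl]
  rw [hx, key, h5, h5, h6]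
  ring
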